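/- Let N be a positive integer and μ, ε > 0 real. Let D₁, D₂, D₃ be pairwise commuting skew-symmetric real N×N matrices, 𝔻 := [[0, −D₃, D₂], [D₃, 0, −D₁], [−D₂, D₁, 0]] (3N×3N), 𝒟 := (1/√(με))·[[0, −𝔻], [𝔻, 0]] (6N×6N), and for k = 1, 2, 3 let B_k be the block-diagonal 3N×3N matrix with each diagonal block equal to D_k. Given H⁰, E⁰ ∈ ℝ^(3N), define (√μ·H^t, √ε·E^t) = exp(t𝒟)·(√μ·H⁰, √ε·E⁰) and set Ḣ^t := −(1/μ)·𝔻·E^t, Ė^t := (1/ε)·𝔻·H^t. Then for each k = 1, 2, 3 and all t ∈ ℝ: μ·‖B_k Ḣ^t‖² + ε·‖B_k Ė^t‖² = μ·‖B_k Ḣ⁰‖² + ε·‖B_k Ė⁰‖². -/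

import Mathlib

open Matrix

/-- A `3N × 3N` block matrix built from a `3 × 3` array of `N × N` blocks. -/
def blockMat3 {N : ℕ} {α : Type*} (A : Fin 3 → Fin 3 → Matrix (Fin N) (Fin N) α) :
    Matrix (Fin 3 × Fin N) (Fin 3 × Fin N) α :=
  Matrix.of fun p q => A p.1 q.1 p.2 q.2

/-- The `3N × 3N` block-diagonal matrix with each diagonal block equal to `D`. -/
def blockDiag3 {N : ℕ} {α : Type*} [Zero α] (D : Matrix (Fin N) (Fin N) α) :
    Matrix (Fin 3 × Fin N) (Fin 3 × Fin N) α :=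
  Matrix.of fun p q => if p.1 = q.1 then D p.2 q.2 else 0

lemma blockMat3_mul {N : ℕ} (A B : Fin 3 → Fin 3 → Matrix (Fin N) (Fin N) ℝ) :
    blockMat3 A * blockMat3 B = blockMat3 (fun i j => ∑ l, A i l * B l j) := by
  ext ⟨i, a⟩ ⟨j, b⟩
  simp [blockMat3, Matrix.mul_apply, Fintype.sum_prod_type, Matrix.sum_apply]

lemma blockDiag3_eq {N : ℕ} (D : Matrix (Fin N) (Fin N) ℝ) :
    blockDiag3 D = blockMat3 (fun i j => if i = j then D else 0) := by
  ext ⟨i, a⟩ ⟨j, b⟩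
  simp only [blockDiag3, blockMat3, Matrix.of_apply]
  split <;> simp

lemma blockMat3_transpose {N : ℕ} (A : Fin 3 → Fin 3 → Matrix (Fin N) (Fin N) ℝ) :
    (blockMat3 A)ᵀ = blockMat3 (fun i j => (A j i)ᵀ) := by
  ext ⟨i, a⟩ ⟨j, b⟩
  simp [blockMat3]

lemma comm_helper {N : ℕ} (Dk D1 D2 D3 : Matrix (Fin N) (Fin N) ℝ)
    (h1 : Dk * D1 = D1 * Dk) (h2 : Dk * D2 = D2 * Dk) (h3 : Dk * D3 = D3 * Dk) :
    blockDiag3 Dk * blockMat3 ![![0, -D3, D2], ![D3, 0, -D1], ![-D2, D1, 0]] =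
      blockMat3 ![![0, -D3, D2], ![D3, 0, -D1], ![-D2, D1, 0]] * blockDiag3 Dk := by
  rw [blockDiag3_eq, blockMat3_mul, blockMat3_mul]
  have : (fun i j => ∑ l, (if i = l then Dk else 0) * ![![0, -D3, D2], ![D3, 0, -D1], ![-D2, D1, 0]] l j)
      = (fun i j => ∑ l, ![![0, -D3, D2], ![D3, 0, -D1], ![-D2, D1, 0]] i l * (if l = j then Dk else 0)) := by
    funext i j
    fin_cases i <;> fin_cases j <;>
      simp [Fin.sum_univ_three, h1, h2, h3, mul_neg, neg_mul]
  rw [this]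

lemma sym_helper {N : ℕ} (D1 D2 D3 : Matrix (Fin N) (Fin N) ℝ)
    (hD1 : D1ᵀ = -D1) (hD2 : D2ᵀ = -D2) (hD3 : D3ᵀ = -D3) :
    (blockMat3 ![![0, -D3, D2], ![D3, 0, -D1], ![-D2, D1, 0]])ᵀ =
      blockMat3 ![![0, -D3, D2], ![D3, 0, -D1], ![-D2, D1, 0]] := by
  rw [blockMat3_transpose]
  have : (fun i j => (![![0, -D3, D2], ![D3, 0, -D1], ![-D2, D1, 0]] j i)ᵀ)
      = ![![0, -D3, D2], ![D3, 0, -D1], ![-D2, D1, 0]] := by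
    funext i j
    fin_cases i <;> fin_cases j <;>
      simp [hD1, hD2, hD3, Matrix.transpose_neg]
  rw [this]

lemma sum_sq_mulVec_of_orth {n : Type*} [Fintype n] [DecidableEq n] (A : Matrix n n ℝ)
    (h : Aᵀ * A = 1) (w : n → ℝ) : ∑ i, (A.mulVec w i) ^ 2 = ∑ i, w i ^ 2 := by
  have h1 : ∀ v : n → ℝ, ∑ i, v i ^ 2 = v ⬝ᵥ v := by
    intro v; simp [dotProduct, sq]
  rw [h1, h1]
  calc A *ᵥ w ⬝ᵥ A *ᵥ w = (A *ᵥ w) ᵥ* A ⬝ᵥ w := dotProduct_mulVec _ _ _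
    _ = (Aᵀ *ᵥ (A *ᵥ w)) ⬝ᵥ w := by rw [Matrix.mulVec_transpose]
    _ = ((Aᵀ * A) *ᵥ w) ⬝ᵥ w := by rw [Matrix.mulVec_mulVec]
    _ = w ⬝ᵥ w := by rw [h, Matrix.one_mulVec]

lemma mulVec_const_mul {n : Type*} [Fintype n] (A : Matrix n n ℝ) (c : ℝ) (w : n → ℝ) (i : n) :
    A.mulVec (fun j => c * w j) i = c * A.mulVec w i := by
  simp [Matrix.mulVec, dotProduct, Finset.mul_sum, mul_left_comm]

/-- the fully discrete exponential scheme exactly conserves the discrete energy ℰ₄: `μ‖B_k Ḣᵗ‖² + ε‖B_k Ėᵗ‖²` is constant in `t` for each `k`. -/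
theorem discrete_energy_conservation_E4 {N : ℕ} (hN : 0 < N) (μ ε : ℝ) (hμ : 0 < μ) (hε : 0 < ε)
    (D1 D2 D3 : Matrix (Fin N) (Fin N) ℝ)
    (h12 : D1 * D2 = D2 * D1) (h13 : D1 * D3 = D3 * D1) (h23 : D2 * D3 = D3 * D2)
    (hD1 : D1ᵀ = -D1) (hD2 : D2ᵀ = -D2) (hD3 : D3ᵀ = -D3)
    (𝔻 : Matrix (Fin 3 × Fin N) (Fin 3 × Fin N) ℝ)
    (h𝔻 : 𝔻 = blockMat3 ![![0, -D3, D2], ![D3, 0, -D1], ![-D2, D1, 0]])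
    (𝒟 : Matrix ((Fin 3 × Fin N) ⊕ (Fin 3 × Fin N)) ((Fin 3 × Fin N) ⊕ (Fin 3 × Fin N)) ℝ)
    (h𝒟 : 𝒟 = (Real.sqrt (μ * ε))⁻¹ • Matrix.fromBlocks 0 (-𝔻) 𝔻 0)
    (H E : ℝ → (Fin 3 × Fin N → ℝ))
    (hprop : ∀ t : ℝ,
      Sum.elim (fun i => Real.sqrt μ * H t i) (fun i => Real.sqrt ε * E t i) =
        (NormedSpace.exp (t • 𝒟)).mulVec
          (Sum.elim (fun i => Real.sqrt μ * H 0 i) (fun i => Real.sqrt ε * E 0 i)))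
    (B : Fin 3 → Matrix (Fin 3 × Fin N) (Fin 3 × Fin N) ℝ)
    (hB : ∀ k : Fin 3, B k = blockDiag3 (![D1, D2, D3] k))
    (Hdot Edot : ℝ → (Fin 3 × Fin N → ℝ))
    (hHdot : ∀ t : ℝ, Hdot t = (-(1 / μ)) • 𝔻.mulVec (E t))
    (hEdot : ∀ t : ℝ, Edot t = (1 / ε) • 𝔻.mulVec (H t)) :
    ∀ k : Fin 3, ∀ t : ℝ,
      μ * (∑ i, (B k).mulVec (Hdot t) i ^ 2) + ε * (∑ i, (B k).mulVec (Edot t) i ^ 2) =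
        μ * (∑ i, (B k).mulVec (Hdot 0) i ^ 2) + ε * (∑ i, (B k).mulVec (Edot 0) i ^ 2) := by
  intro k t
  -- B k commutes with 𝔻
  have hBD : B k * 𝔻 = 𝔻 * B k := by
    rw [hB, h𝔻]
    fin_cases k
    · simpa using comm_helper D1 D1 D2 D3 rfl h12 h13
    · simpa using comm_helper D2 D1 D2 D3 h12.symm rfl h23
    · simpa using comm_helper D3 D1 D2 D3 h13.symm h23.symm rfl
  obtain ⟨C, hCdef⟩ : ∃ C, C = B k * 𝔻 := ⟨_, rfl⟩
  have hC𝔻 : C * 𝔻 = 𝔻 * C := by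
    rw [hCdef, ← mul_assoc 𝔻 (B k) 𝔻, ← hBD]
  obtain ⟨M, hMdef⟩ :
      ∃ M : Matrix ((Fin 3 × Fin N) ⊕ (Fin 3 × Fin N)) ((Fin 3 × Fin N) ⊕ (Fin 3 × Fin N)) ℝ,
        M = Matrix.fromBlocks C 0 0 C := ⟨_, rfl⟩
  have hM𝒟 : Commute M 𝒟 := by
    rw [h𝒟]
    apply Commute.smul_right
    show M * Matrix.fromBlocks 0 (-𝔻) 𝔻 0 = Matrix.fromBlocks 0 (-𝔻) 𝔻 0 * M
    rw [hMdef]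
    rw [Matrix.fromBlocks_multiply, Matrix.fromBlocks_multiply]
    simp only [Matrix.mul_zero, Matrix.zero_mul, mul_zero, zero_mul, add_zero, zero_add,
      mul_neg, neg_mul, neg_zero, hC𝔻]
  -- orthogonality of exp(t • 𝒟)
  have h𝔻T : 𝔻ᵀ = 𝔻 := by rw [h𝔻]; exact sym_helper D1 D2 D3 hD1 hD2 hD3
  have h𝒟T : 𝒟ᵀ = -𝒟 := by
    rw [h𝒟, Matrix.transpose_smul, Matrix.fromBlocks_transpose, Matrix.transpose_neg, h𝔻T,
      Matrix.transpose_zero, ← smul_neg]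
    congr 1
    simp [Matrix.fromBlocks_neg]
  have hX : (t • 𝒟)ᵀ = -(t • 𝒟) := by rw [Matrix.transpose_smul, h𝒟T, smul_neg]
  have hA : (NormedSpace.exp (t • 𝒟))ᵀ * NormedSpace.exp (t • 𝒟) = 1 := by
    rw [← Matrix.exp_transpose, hX,
      ← Matrix.exp_add_of_commute _ _ (Commute.neg_left (Commute.refl (t • 𝒟))),
      neg_add_cancel, NormedSpace.exp_zero]
  -- commutation of M with the exponential
  have hMexp : M * NormedSpace.exp (t • 𝒟) = NormedSpace.exp (t • 𝒟) * M :=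
    (hM𝒟.smul_right t).exp_right
  -- the conserved quantity
  obtain ⟨v, hvdef⟩ : ∃ v : ℝ → ((Fin 3 × Fin N) ⊕ (Fin 3 × Fin N) → ℝ),
      v = fun s => Sum.elim (fun i => Real.sqrt μ * H s i) (fun i => Real.sqrt ε * E s i) :=
    ⟨_, rfl⟩
  have hMv : ∀ s : ℝ, M.mulVec (v s) =
      Sum.elim (fun i => Real.sqrt μ * C.mulVec (H s) i)
               (fun i => Real.sqrt ε * C.mulVec (E s) i) := by
    intro s
    rw [hMdef, Matrix.fromBlocks_mulVec]
    funext j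
    cases j with
    | inl i => simp [hvdef, Matrix.zero_mulVec, mulVec_const_mul]
    | inr i => simp [hvdef, Matrix.zero_mulVec, mulVec_const_mul]
  have key : ∀ s : ℝ,
      μ * (∑ i, (B k).mulVec (Hdot s) i ^ 2) + ε * (∑ i, (B k).mulVec (Edot s) i ^ 2) =
        (μ * ε)⁻¹ * ∑ j, (M.mulVec (v s) j) ^ 2 := by
    intro s
    have e1 : ∀ i, (B k).mulVec (Hdot s) i = (-(1 / μ)) * C.mulVec (E s) i := by
      intro i
      rw [hHdot s, Matrix.mulVec_smul, Matrix.mulVec_mulVec]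
      simp [hCdef]
    have e2 : ∀ i, (B k).mulVec (Edot s) i = (1 / ε) * C.mulVec (H s) i := by
      intro i
      rw [hEdot s, Matrix.mulVec_smul, Matrix.mulVec_mulVec]
      simp [hCdef]
    have hs : ∑ j, (M.mulVec (v s) j) ^ 2 =
        μ * (∑ i, C.mulVec (H s) i ^ 2) + ε * (∑ i, C.mulVec (E s) i ^ 2) := by
      rw [hMv s]
      rw [Fintype.sum_sum_type]
      simp only [Sum.elim_inl, Sum.elim_inr, mul_pow, Real.sq_sqrt hμ.le, Real.sq_sqrt hε.le]
      rw [Finset.mul_sum, Finset.mul_sum]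
    have alg : ∀ x y : ℝ, μ * ((1 / μ) ^ 2 * x) + ε * ((1 / ε) ^ 2 * y) =
        (μ * ε)⁻¹ * (μ * y + ε * x) := by
      intro x y
      field_simp
      ring
    simp only [e1, e2, hs, neg_mul, neg_sq, mul_pow]
    rw [← Finset.mul_sum, ← Finset.mul_sum]
    exact alg _ _
  rw [key t, key 0]
  congr 1
  have hv : v t = (NormedSpace.exp (t • 𝒟)).mulVec (v 0) := by rw [hvdef]; exact hprop t
  rw [hv, Matrix.mulVec_mulVec, hMexp, ← Matrix.mulVec_mulVec]
  exact sum_sq_mulVec_of_orth _ hA _
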